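/- Let X be a real linear space, Y a real Banach space, and r, s, t positive integers. If f, g, h : X → Y satisfy f(0) = g(0) = h(0) = 0 and ‖r·f((s·x + t·y)/r) − s·g(x) − t·h(y)‖ ≤ φ(x, y) for all x, y ∈ X, where φ : X × X → [0, ∞) satisfies φ̃(x, y) := (1/(2r)) Σ_{n=0}^∞ 2^{−n} [φ(2ⁿ(r/s)x, 2ⁿ(r/t)y) + φ(2ⁿ(r/s)x, 0) + φ(0, 2ⁿ(r/t)y)] < ∞ for all x, y, then there exists a unique additive map T : X → Y such that ‖f(x) − T(x)‖ ≤ φ̃(x, x) for all x ∈ X. -/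

import Mathlib

private lemma additive_nsmul' {X Y : Type*} [AddCommGroup X] [AddCommGroup Y]
    (T : X → Y) (hT : ∀ x y, T (x + y) = T x + T y) (n : ℕ) (x : X) :
    T (n • x) = n • T x := by
  have h0 : T 0 = 0 := by
    have h := hT 0 0
    rw [add_zero] at h
    exact left_eq_add.mp h
  induction n with
  | zero => simpa using h0
  | succ n ih => rw [succ_nsmul, hT, ih, succ_nsmul]


theorem stmt_0 {X Y : Type*} [AddCommGroup X] [Module ℝ X]
    [NormedAddCommGroup Y] [NormedSpace ℝ Y] [CompleteSpace Y]
    (r s t : ℕ) (hr : 0 < r) (hs : 0 < s) (ht : 0 < t)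
    (f g h : X → Y) (φ : X → X → ℝ) (hφ : ∀ x y, 0 ≤ φ x y)
    (hf0 : f 0 = 0) (hg0 : g 0 = 0) (hh0 : h 0 = 0)
    (hsum : ∀ x y : X, Summable (fun n : ℕ =>
      (1 / 2 ^ n : ℝ) * (φ ((2 ^ n * ((r : ℝ) / s)) • x) ((2 ^ n * ((r : ℝ) / t)) • y)
        + φ ((2 ^ n * ((r : ℝ) / s)) • x) 0 + φ 0 ((2 ^ n * ((r : ℝ) / t)) • y))))
    (hineq : ∀ x y : X,
      ‖(r : ℝ) • f (((r : ℝ)⁻¹) • ((s : ℝ) • x + (t : ℝ) • y)) - (s : ℝ) • g x - (t : ℝ) • h y‖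
        ≤ φ x y) :
    ∃! T : X → Y, (∀ x y : X, T (x + y) = T x + T y) ∧
      ∀ x : X, ‖f x - T x‖ ≤ (1 / (2 * r) : ℝ) * ∑' n : ℕ,
        (1 / 2 ^ n : ℝ) * (φ ((2 ^ n * ((r : ℝ) / s)) • x) ((2 ^ n * ((r : ℝ) / t)) • x)
          + φ ((2 ^ n * ((r : ℝ) / s)) • x) 0 + φ 0 ((2 ^ n * ((r : ℝ) / t)) • x)) := by
  have hr' : (0:ℝ) < r := by exact_mod_cast hr
  have hs' : (0:ℝ) < s := by exact_mod_cast hs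
  have ht' : (0:ℝ) < t := by exact_mod_cast ht
  set ψ : X → X → ℝ := fun x y =>
    φ (((r:ℝ)/s) • x) (((r:ℝ)/t) • y) + φ (((r:ℝ)/s) • x) 0 + φ 0 (((r:ℝ)/t) • y) with hψdef
  have hsummand : ∀ (x y : X) (n : ℕ),
      (1 / 2 ^ n : ℝ) * (φ ((2 ^ n * ((r : ℝ) / s)) • x) ((2 ^ n * ((r : ℝ) / t)) • y)
        + φ ((2 ^ n * ((r : ℝ) / s)) • x) 0 + φ 0 ((2 ^ n * ((r : ℝ) / t)) • y))
      = (1/2^n : ℝ) * ψ ((2:ℝ)^n • x) ((2:ℝ)^n • y) := by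
    intro x y n
    simp only [hψdef, smul_smul]
    rw [mul_comm ((r:ℝ)/s), mul_comm ((r:ℝ)/t)]
  -- key inequality
  have key : ∀ x y : X, ‖f (x + y) - f x - f y‖ ≤ ψ x y / r := by
    intro x y
    have e1 : (s:ℝ) • (((r:ℝ)/s) • x) = (r:ℝ) • x := by
      rw [smul_smul]; congr 1; field_simp
    have e2 : (t:ℝ) • (((r:ℝ)/t) • y) = (r:ℝ) • y := by
      rw [smul_smul]; congr 1; field_simp
    have h1 := hineq (((r:ℝ)/s) • x) (((r:ℝ)/t) • y)
    have h2 := hineq (((r:ℝ)/s) • x) 0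
    have h3 := hineq 0 (((r:ℝ)/t) • y)
    rw [e1, e2, ← smul_add, inv_smul_smul₀ hr'.ne'] at h1
    rw [smul_zero, add_zero, e1, inv_smul_smul₀ hr'.ne', hh0, smul_zero, sub_zero] at h2
    rw [smul_zero, zero_add, e2, inv_smul_smul₀ hr'.ne', hg0, smul_zero, sub_zero] at h3
    have hdecomp : (r:ℝ) • (f (x+y) - f x - f y)
        = ((r:ℝ) • f (x+y) - (s:ℝ) • g (((r:ℝ)/s) • x) - (t:ℝ) • h (((r:ℝ)/t) • y))
          - ((r:ℝ) • f x - (s:ℝ) • g (((r:ℝ)/s) • x))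
          - ((r:ℝ) • f y - (t:ℝ) • h (((r:ℝ)/t) • y)) := by module
    rw [le_div_iff₀ hr']
    calc ‖f (x+y) - f x - f y‖ * r = ‖(r:ℝ) • (f (x+y) - f x - f y)‖ := by
          rw [norm_smul, Real.norm_eq_abs, abs_of_pos hr', mul_comm]
      _ ≤ φ (((r:ℝ)/s) • x) (((r:ℝ)/t) • y) + φ (((r:ℝ)/s) • x) 0 + φ 0 (((r:ℝ)/t) • y) := by
          rw [hdecomp]
          refine (norm_sub_le _ _).trans (add_le_add ((norm_sub_le _ _).trans
            (add_le_add h1 h2)) h3)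
      _ = ψ x y := rfl
  have hS : ∀ x y : X, Summable (fun n : ℕ => (1/2^n : ℝ) * ψ ((2:ℝ)^n • x) ((2:ℝ)^n • y)) :=
    fun x y => (hsum x y).congr (hsummand x y)
  set a : ℕ → X → Y := fun n x => (1/2^n : ℝ) • f ((2:ℝ)^n • x) with hadef
  set w : X → ℕ → ℝ := fun x n => (1/2^n : ℝ) * ψ ((2:ℝ)^n • x) ((2:ℝ)^n • x) with hwdef
  have hdist : ∀ (x : X) (n : ℕ), dist (a n x) (a (n+1) x) ≤ (1/(2*r)) * w x n := by
    intro x n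
    have hz : (2:ℝ)^(n+1) • x = (2:ℝ)^n • x + (2:ℝ)^n • x := by
      rw [← add_smul]; ring_nf
    have hk := key ((2:ℝ)^n • x) ((2:ℝ)^n • x)
    rw [← hz] at hk
    have heq : a n x - a (n+1) x
        = -(((1:ℝ)/2^(n+1)) • (f ((2:ℝ)^(n+1) • x) - f ((2:ℝ)^n • x) - f ((2:ℝ)^n • x))) := by
      simp only [hadef]
      module
    rw [dist_eq_norm, heq, norm_neg, norm_smul, Real.norm_eq_abs,
      abs_of_pos (by positivity : (0:ℝ) < 1/2^(n+1))]
    calc (1/2^(n+1) : ℝ) * ‖f ((2:ℝ)^(n+1) • x) - f ((2:ℝ)^n • x) - f ((2:ℝ)^n • x)‖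
        ≤ (1/2^(n+1)) * (ψ ((2:ℝ)^n • x) ((2:ℝ)^n • x) / r) :=
          mul_le_mul_of_nonneg_left hk (by positivity)
      _ = (1/(2*r)) * w x n := by
          have hgen : ∀ P : ℝ, (1/2^(n+1) : ℝ) * (P / r) = (1/(2*r)) * ((1/2^n) * P) := by
            intro P; rw [pow_succ]; ring
          exact hgen _
  have hdsum : ∀ x : X, Summable (fun n => (1/(2*r):ℝ) * w x n) := fun x => (hS x x).mul_left _
  have hcau : ∀ x : X, CauchySeq (fun n => a n x) := fun x =>
    cauchySeq_of_dist_le_of_summable _ (hdist x) (hdsum x)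
  set T : X → Y := fun x => Filter.limUnder Filter.atTop (fun n => a n x) with hTdef
  have hTlim : ∀ x, Filter.Tendsto (fun n => a n x) Filter.atTop (nhds (T x)) := by
    intro x
    simp only [hTdef]
    exact (hcau x).tendsto_limUnder
  have hbound : ∀ x, ‖f x - T x‖ ≤ (1/(2*r)) * ∑' n, w x n := by
    intro x
    have h0 : a 0 x = f x := by simp [hadef]
    have hdd := dist_le_tsum_of_dist_le_of_tendsto₀ _ (hdist x) (hdsum x) (hTlim x)
    rw [h0, dist_eq_norm, tsum_mul_left] at hdd
    exact hdd
  have hTadd : ∀ x y : X, T (x + y) = T x + T y := by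
    intro x y
    have h1 : Filter.Tendsto (fun n => a n (x+y) - a n x - a n y) Filter.atTop
        (nhds (T (x+y) - T x - T y)) := ((hTlim (x+y)).sub (hTlim x)).sub (hTlim y)
    have hb : ∀ n : ℕ, ‖a n (x+y) - a n x - a n y‖
        ≤ (1/r : ℝ) * ((1/2^n) * ψ ((2:ℝ)^n • x) ((2:ℝ)^n • y)) := by
      intro n
      have hk := key ((2:ℝ)^n • x) ((2:ℝ)^n • y)
      have heq : a n (x+y) - a n x - a n y
          = ((1:ℝ)/2^n) • (f ((2:ℝ)^n • x + (2:ℝ)^n • y) - f ((2:ℝ)^n • x) - f ((2:ℝ)^n • y)) := by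
        simp only [hadef, smul_add]
        module
      rw [heq, norm_smul, Real.norm_eq_abs, abs_of_pos (by positivity : (0:ℝ) < 1/2^n)]
      calc (1/2^n : ℝ) * ‖f ((2:ℝ)^n • x + (2:ℝ)^n • y) - f ((2:ℝ)^n • x) - f ((2:ℝ)^n • y)‖
          ≤ (1/2^n) * (ψ ((2:ℝ)^n • x) ((2:ℝ)^n • y) / r) :=
            mul_le_mul_of_nonneg_left hk (by positivity)
        _ = (1/r : ℝ) * ((1/2^n) * ψ ((2:ℝ)^n • x) ((2:ℝ)^n • y)) := by ring
    have h2 : Filter.Tendsto (fun n => a n (x+y) - a n x - a n y) Filter.atTop (nhds 0) := by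
      apply squeeze_zero_norm hb
      have := ((hS x y).tendsto_atTop_zero).const_mul (1/r : ℝ)
      simpa using this
    have h0 := tendsto_nhds_unique h1 h2
    rwa [sub_sub, sub_eq_zero] at h0
  refine ⟨T, ⟨hTadd, ?_⟩, ?_⟩
  · intro x
    calc ‖f x - T x‖ ≤ (1/(2*r)) * ∑' n, w x n := hbound x
      _ = _ := by rw [tsum_congr (fun n => (hsummand x x n).symm)]
  · rintro T' ⟨hT'add, hT'bound⟩
    funext x
    have hB : ∀ z : X, ‖f z - T' z‖ ≤ (1/(2*r)) * ∑' n, w z n := by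
      intro z
      have hb' := hT'bound z
      rwa [tsum_congr (fun n => hsummand z z n)] at hb'
    have hpow : ∀ (m : ℕ) (T₀ : X → Y), (∀ u v : X, T₀ (u + v) = T₀ u + T₀ v) →
        ∀ z : X, T₀ ((2:ℝ)^m • z) = (2:ℝ)^m • T₀ z := by
      intro m T₀ hT₀ z
      have hc : ((2:ℝ)^m) • z = (2^m : ℕ) • z := by
        rw [← Nat.cast_smul_eq_nsmul ℝ]; norm_num
      calc T₀ ((2:ℝ)^m • z) = T₀ ((2^m : ℕ) • z) := by rw [hc]
        _ = (2^m : ℕ) • T₀ z := additive_nsmul' T₀ hT₀ _ _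
        _ = (2:ℝ)^m • T₀ z := by rw [← Nat.cast_smul_eq_nsmul ℝ]; norm_num
    have htail : ∀ m : ℕ, (1/2^m : ℝ) * ∑' n, w ((2:ℝ)^m • x) n = ∑' n, w x (n + m) := by
      intro m
      rw [← tsum_mul_left]
      refine tsum_congr fun n => ?_
      simp only [hwdef]
      rw [smul_smul, ← pow_add]
      have hgen : ∀ P : ℝ, (1/2^m : ℝ) * ((1/2^n) * P) = (1/2^(n+m)) * P := by
        intro P; rw [pow_add]; ring
      exact hgen _
    have hest : ∀ m : ℕ, ‖T' x - T x‖ ≤ (1/r : ℝ) * ∑' n, w x (n + m) := by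
      intro m
      have htri : ‖T' ((2:ℝ)^m • x) - T ((2:ℝ)^m • x)‖
          ≤ 2 * ((1/(2*r)) * ∑' n, w ((2:ℝ)^m • x) n) := by
        have e : T' ((2:ℝ)^m • x) - T ((2:ℝ)^m • x)
            = (f ((2:ℝ)^m • x) - T ((2:ℝ)^m • x)) - (f ((2:ℝ)^m • x) - T' ((2:ℝ)^m • x)) := by
          abel
        rw [e]
        have h1 := hbound ((2:ℝ)^m • x)
        have h2 := hB ((2:ℝ)^m • x)
        have := norm_sub_le (f ((2:ℝ)^m • x) - T ((2:ℝ)^m • x)) (f ((2:ℝ)^m • x) - T' ((2:ℝ)^m • x))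
        linarith
      have e2 : T' x - T x = (1/2^m : ℝ) • (T' ((2:ℝ)^m • x) - T ((2:ℝ)^m • x)) := by
        rw [hpow m T' hT'add x, hpow m T hTadd x, smul_sub, smul_smul, smul_smul]
        norm_num
      calc ‖T' x - T x‖ = (1/2^m : ℝ) * ‖T' ((2:ℝ)^m • x) - T ((2:ℝ)^m • x)‖ := by
            rw [e2, norm_smul, Real.norm_eq_abs, abs_of_pos (by positivity : (0:ℝ) < 1/2^m)]
        _ ≤ (1/2^m : ℝ) * (2 * ((1/(2*r)) * ∑' n, w ((2:ℝ)^m • x) n)) :=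
            mul_le_mul_of_nonneg_left htri (by positivity)
        _ = (1/r : ℝ) * ((1/2^m) * ∑' n, w ((2:ℝ)^m • x) n) := by ring
        _ = (1/r : ℝ) * ∑' n, w x (n + m) := by rw [htail m]
    have hzero : Filter.Tendsto (fun m : ℕ => (1/r : ℝ) * ∑' n, w x (n + m))
        Filter.atTop (nhds 0) := by
      have := (_root_.tendsto_sum_nat_add (w x)).const_mul (1/r : ℝ)
      simpa using this
    have hle : ‖T' x - T x‖ ≤ 0 := ge_of_tendsto' hzero hest
    exact sub_eq_zero.mp (norm_le_zero_iff.mp hle)
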